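/- Let v ∈ V and suppose v has a neighbor u with N(u) \ N[v] = ∅ (i.e., N(u) ⊆ N[v]). Then there exists a maximum independent set of G that does not contain v. -/

import Mathlib

variable {V : Type*} [Fintype V] [DecidableEq V]

def IsIndep (G : SimpleGraph V) (I : Finset V) : Prop :=
  ∀ u ∈ I, ∀ v ∈ I, ¬ G.Adj u v

def IsMaxIndep (G : SimpleGraph V) (I : Finset V) : Prop :=
  IsIndep G I ∧ ∀ J : Finset V, IsIndep G J → J.card ≤ I.card

theorem unconfined_first_step (G : SimpleGraph V) [DecidableRel G.Adj] (u v : V)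
    (huv : G.Adj u v)
    (hsub : G.neighborFinset u ⊆ insert v (G.neighborFinset v)) :
    ∃ I : Finset V, IsMaxIndep G I ∧ v ∉ I := by
  classical
  obtain ⟨I, hImem, hmax⟩ := Finset.exists_max_image
    ((Finset.univ : Finset (Finset V)).filter (fun J => IsIndep G J)) Finset.card
    ⟨∅, Finset.mem_filter.mpr ⟨Finset.mem_univ _, by simp [IsIndep]⟩⟩
  have hIindep : IsIndep G I := (Finset.mem_filter.mp hImem).2
  have hIcard : ∀ J : Finset V, IsIndep G J → J.card ≤ I.card := by
    intro J hJ
    exact hmax J (Finset.mem_filter.mpr ⟨Finset.mem_univ _, hJ⟩)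
  by_cases hv : v ∈ I
  · -- replace v by u
    have huI : u ∉ I := fun huI => hIindep u huI v hv huv
    have hne : u ≠ v := G.ne_of_adj huv
    set I' := insert u (I.erase v) with hI'
    have key : ∀ b ∈ I.erase v, ¬ G.Adj u b := by
      intro b hb hub
      have hbn : b ∈ G.neighborFinset u := (G.mem_neighborFinset u b).mpr hub
      rcases Finset.mem_insert.mp (hsub hbn) with hb' | hbn'
      · exact (Finset.mem_erase.mp hb).1 hb'
      · exact hIindep v hv b (Finset.mem_of_mem_erase hb)
          ((G.mem_neighborFinset v b).mp hbn')
    have hindep' : IsIndep G I' := by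
      intro a ha b hb hab
      rcases Finset.mem_insert.mp ha with ha' | ha3
      · rcases Finset.mem_insert.mp hb with hb' | hb3
        · exact hab.ne (ha'.trans hb'.symm)
        · exact key b hb3 (ha' ▸ hab)
      · rcases Finset.mem_insert.mp hb with hb' | hb3
        · exact key a ha3 (G.adj_symm (hb' ▸ hab))
        · exact hIindep a (Finset.mem_of_mem_erase ha3) b (Finset.mem_of_mem_erase hb3) hab
    have hcard : I'.card = I.card := by
      rw [hI', Finset.card_insert_of_notMem (fun h => huI (Finset.mem_of_mem_erase h)),
        Finset.card_erase_of_mem hv]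
      have := Finset.card_pos.mpr ⟨v, hv⟩
      omega
    refine ⟨I', ⟨hindep', fun J hJ => hcard ▸ hIcard J hJ⟩, ?_⟩
    intro hvI'
    rcases Finset.mem_insert.mp hvI' with h | h
    · exact hne h.symm
    · exact (Finset.mem_erase.mp h).1 rfl
  · exact ⟨I, ⟨hIindep, hIcard⟩, hv⟩
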